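/- Let g be a restricted Lie algebra over k of characteristic p > 2 and M an abelian restricted Lie algebra with a restricted g-operation. Every restricted extension (E, φ) of M by g is similar to a restricted extension in which M is strongly abelian; concretely, extending the p-semilinear map m ↦ m^[p] (which maps M into the center of E) to a p-semilinear map s : E → C(E) and replacing the p-operation of E by [p] − s yields a new p-operation on E under which M becomes strongly abelian. -/

import Mathlib

open TensorProduct

/-- The linear map extracting the `n`-th coefficient of an element of `k[λ] ⊗ g`. -/
noncomputable def jacobsonCoeff (k : Type*) [CommRing k] (g : Type*) [AddCommGroup g]
    [Module k g] (n : ℕ) : (Polynomial k ⊗[k] g) →ₗ[k] g :=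
  (TensorProduct.lid k g).toLinearMap.comp (LinearMap.rTensor g (Polynomial.lcoeff k n))

/-- `jacobsonS k p g x y i` is the element `sᵢ(x,y)` of `g` determined by the requirement
that `i·sᵢ(x,y)` is the coefficient of `λ^{i-1}` in `(ad(λx+y))^{p-1}(x)`, computed in the
base change `k[λ] ⊗ g`. -/
noncomputable def jacobsonS (k : Type*) [Field k] (p : ℕ) (g : Type*) [LieRing g]
    [LieAlgebra k g] (x y : g) (i : ℕ) : g :=
  ((i : k)⁻¹) • jacobsonCoeff k g (i - 1)
    (((LieAlgebra.ad (Polynomial k) (Polynomial k ⊗[k] g)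
        (Polynomial.X ⊗ₜ[k] x + 1 ⊗ₜ[k] y)) ^ (p - 1)) (1 ⊗ₜ[k] x))

/-- `P` is a `p`-operation on the Lie algebra `g` over `k`:
`(c•x)^[p] = c^p • x^[p]`, `ad(x^[p]) = (ad x)^p`, and the Jacobson formula
`(x+y)^[p] = x^[p] + y^[p] + ∑_{i=1}^{p-1} sᵢ(x,y)`. -/
def IsPOperation (k : Type*) [Field k] (p : ℕ) (g : Type*) [LieRing g] [LieAlgebra k g]
    (P : g → g) : Prop :=
  (∀ (c : k) (x : g), P (c • x) = c ^ p • P x) ∧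
  (∀ x y : g, ⁅P x, y⁆ = ((LieAlgebra.ad k g x) ^ p) y) ∧
  (∀ x y : g, P (x + y) = P x + P y + ∑ i ∈ Finset.Icc 1 (p - 1), jacobsonS k p g x y i)

/-- Every restricted extension `(E,φ)` of `M` by `g` is similar to one in which `M`
is strongly abelian: the `p`-map sends the abelian ideal `M` into the center of `E`
and is `p`-semilinear there; extending it to a `p`-semilinear map `s : E → C(E)`,
the map `[p] - s` is again a `p`-operation on `E`, and for it the `p`-map vanishes
on `M`, i.e. `M` becomes strongly abelian. -/
theorem stmt15 (k : Type*) [Field k] (p : ℕ) [Fact p.Prime] (hp : 2 < p) [CharP k p]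
    (E : Type*) [LieRing E] [LieAlgebra k E] (PE : E → E) (hPE : IsPOperation k p E PE)
    (M : LieIdeal k E)
    (habel : ∀ m m' : E, m ∈ M → m' ∈ M → ⁅m, m'⁆ = 0)
    (hMres : ∀ m : E, m ∈ M → PE m ∈ M)
    -- `s` is a `p`-semilinear map from `E` to the center `C(E)` extending `m ↦ m^[p]`
    (s : E → E)
    (hsemi : ∀ (c : k) (x y : E), s (c • x + y) = c ^ p • s x + s y)
    (hcenter : ∀ x z : E, ⁅s x, z⁆ = 0)
    (hext : ∀ m : E, m ∈ M → s m = PE m) :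
    -- `[p]` maps `M` into the center of `E`
    (∀ m : E, m ∈ M → ∀ z : E, ⁅PE m, z⁆ = 0) ∧
    -- `[p] - s` is a new `p`-operation on `E`
    IsPOperation k p E (fun x => PE x - s x) ∧
    -- under which `M` is strongly abelian
    (∀ m : E, m ∈ M → PE m - s m = 0) := by
  obtain ⟨hsmul, had, hadd⟩ := hPE
  have hs0 : s (0 : E) = 0 := by
    have h := hsemi 1 0 0
    simp only [one_smul, one_pow, add_zero] at h
    exact left_eq_add.mp h
  have hsadd : ∀ x y : E, s (x + y) = s x + s y := by
    intro x y
    have h := hsemi 1 x y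
    simpa using h
  have hcentral : ∀ m : E, m ∈ M → ∀ z : E, ⁅PE m, z⁆ = 0 := by
    intro m hm z
    rw [had m z]
    obtain ⟨q, hq⟩ : ∃ q, p = q + 2 := ⟨p - 2, by omega⟩
    rw [hq, pow_add, Module.End.mul_apply]
    have h2 : ((LieAlgebra.ad k E m) ^ 2) z = 0 := by
      rw [pow_two, Module.End.mul_apply]
      simp only [LieAlgebra.ad_apply]
      exact habel m ⁅m, z⁆ hm (lie_mem_left k E M m z hm)
    rw [h2, map_zero]
  refine ⟨hcentral, ⟨?_, ?_, ?_⟩, ?_⟩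
  · intro c x
    have h := hsemi c x 0
    rw [add_zero, hs0, add_zero] at h
    simp only [hsmul c x, h, smul_sub]
  · intro x y
    rw [sub_lie, hcenter, sub_zero, had]
  · intro x y
    simp only [hadd x y, hsadd x y]
    abel
  · intro m hm
    rw [hext m hm, sub_self]
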